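/- Let E be a 2-uniformly smooth and 2-uniformly convex real Banach space, C ⊆ E nonempty closed convex, and T: C → E a firmly nonexpansive type mapping. Then T is globally Hölder/Lipschitz continuous: there exists a constant L (independent of any bound on ‖x‖, ‖y‖) such that ‖Tx − Ty‖ ≤ L‖x − y‖ for all x, y ∈ C. -/

import Mathlib

open Set

/-- Modulus of smoothness of a normed space `E`. -/
noncomputable def smoothnessModulus (E : Type*) [NormedAddCommGroup E] [NormedSpace ℝ E]
    (τ : ℝ) : ℝ :=
  sSup {t : ℝ | ∃ x y : E, ‖x‖ ≤ 1 ∧ ‖y‖ ≤ 1 ∧ t = (‖x + τ • y‖ + ‖x - τ • y‖) / 2 - 1}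

/-- Modulus of convexity of a normed space `E`. -/
noncomputable def convexityModulus (E : Type*) [NormedAddCommGroup E] [NormedSpace ℝ E]
    (ε : ℝ) : ℝ :=
  sInf {t : ℝ | ∃ x y : E, ‖x‖ ≤ 1 ∧ ‖y‖ ≤ 1 ∧ ‖x - y‖ = ε ∧ t = 1 - ‖x + y‖ / 2}

set_option maxHeartbeats 4000000 in
theorem stmt17 {E : Type*} [NormedAddCommGroup E] [NormedSpace ℝ E] [CompleteSpace E]
    (J : E → (E →L[ℝ] ℝ))
    (hJ : ∀ x : E, J x x = ‖x‖ ^ 2) (hJn : ∀ x : E, ‖J x‖ = ‖x‖)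
    (K : ℝ) (hK : 0 < K)
    -- 2-uniform smoothness
    (hρ : ∀ τ > (0:ℝ), smoothnessModulus E τ ≤ K * τ ^ 2)
    -- 2-uniform convexity
    (h2uc : ∃ c > (0:ℝ), ∀ ε ∈ Ioc (0:ℝ) 2, c * ε ^ 2 ≤ convexityModulus E ε)
    (C : Set E) (hCne : C.Nonempty) (hCcl : IsClosed C) (hCcv : Convex ℝ C)
    (T : E → E)
    -- firmly nonexpansive type on C
    (hT : ∀ x ∈ C, ∀ y ∈ C,
      (J (T x) - J (T y)) (T x - T y) ≤ (J x - J y) (T x - T y)) :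
    ∃ L : ℝ, ∀ x ∈ C, ∀ y ∈ C, ‖T x - T y‖ ≤ L * ‖x - y‖ := by
  obtain ⟨c, hc, hMod⟩ := h2uc
  obtain ⟨C₁, hC₁def⟩ : ∃ r : ℝ, r = 4 * K + (1 + 2 * K) ^ 2 + 5 := ⟨_, rfl⟩
  have hC₁pos : 0 < C₁ := by rw [hC₁def]; nlinarith [sq_nonneg (1 + 2*K)]
  have hC₁5 : 5 ≤ C₁ := by rw [hC₁def]; nlinarith [sq_nonneg (1 + 2*K)]
  -- support functional bound
  have hsupp : ∀ x z : E, J x z ≤ ‖x‖ * ‖z‖ := by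
    intro x z
    calc J x z ≤ |J x z| := le_abs_self _
      _ = ‖J x z‖ := (Real.norm_eq_abs _).symm
      _ ≤ ‖J x‖ * ‖z‖ := (J x).le_opNorm z
      _ = ‖x‖ * ‖z‖ := by rw [hJn]
  -- (★) the 2-uniform smoothness inequality
  have hstar : ∀ x h : E, x ≠ 0 →
      ‖x + h‖ + ‖x - h‖ ≤ 2 * ‖x‖ + 2 * K * ‖h‖ ^ 2 / ‖x‖ := by
    intro x h hx
    have hxn : 0 < ‖x‖ := norm_pos_iff.mpr hx
    by_cases hh : h = 0
    · subst hh
      rw [add_zero, sub_zero, norm_zero]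
      have : 0 ≤ 2 * K * 0 ^ 2 / ‖x‖ := by positivity
      linarith
    · have hhn : 0 < ‖h‖ := norm_pos_iff.mpr hh
      set τ : ℝ := ‖h‖ / ‖x‖ with hτdef
      clear_value τ
      have hτ : 0 < τ := by rw [hτdef]; exact div_pos hhn hxn
      have hbdd : BddAbove {t : ℝ | ∃ a b : E, ‖a‖ ≤ 1 ∧ ‖b‖ ≤ 1 ∧
          t = (‖a + τ • b‖ + ‖a - τ • b‖) / 2 - 1} := by
        refine ⟨τ, ?_⟩
        rintro t ⟨a, b, ha, hb, rfl⟩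
        have h1 : ‖a + τ • b‖ ≤ 1 + τ := by
          calc ‖a + τ • b‖ ≤ ‖a‖ + ‖τ • b‖ := norm_add_le _ _
            _ = ‖a‖ + τ * ‖b‖ := by rw [norm_smul, Real.norm_of_nonneg hτ.le]
            _ ≤ 1 + τ * 1 := by
              have := mul_le_mul_of_nonneg_left hb hτ.le
              linarith
            _ = 1 + τ := by ring
        have h2 : ‖a - τ • b‖ ≤ 1 + τ := by
          calc ‖a - τ • b‖ ≤ ‖a‖ + ‖τ • b‖ := norm_sub_le _ _
            _ = ‖a‖ + τ * ‖b‖ := by rw [norm_smul, Real.norm_of_nonneg hτ.le]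
            _ ≤ 1 + τ * 1 := by
              have := mul_le_mul_of_nonneg_left hb hτ.le
              linarith
            _ = 1 + τ := by ring
        linarith
      have hmem : (‖(‖x‖⁻¹ • x) + τ • (‖h‖⁻¹ • h)‖ + ‖(‖x‖⁻¹ • x) - τ • (‖h‖⁻¹ • h)‖) / 2 - 1
          ∈ {t : ℝ | ∃ a b : E, ‖a‖ ≤ 1 ∧ ‖b‖ ≤ 1 ∧
            t = (‖a + τ • b‖ + ‖a - τ • b‖) / 2 - 1} := by
        refine ⟨‖x‖⁻¹ • x, ‖h‖⁻¹ • h, ?_, ?_, rfl⟩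
        · rw [norm_smul, Real.norm_of_nonneg (by positivity), inv_mul_cancel₀ hxn.ne']
        · rw [norm_smul, Real.norm_of_nonneg (by positivity), inv_mul_cancel₀ hhn.ne']
      have hle := le_csSup hbdd hmem
      have hsmooth := hρ τ hτ
      rw [smoothnessModulus] at hsmooth
      have hle2 := le_trans hle hsmooth
      have e0 : τ * ‖h‖⁻¹ = ‖x‖⁻¹ := by
        rw [hτdef, div_mul_eq_mul_div, mul_inv_cancel₀ hhn.ne', one_div]
      have e2 : (‖x‖⁻¹ • x) + τ • (‖h‖⁻¹ • h) = ‖x‖⁻¹ • (x + h) := by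
        rw [smul_smul, e0, smul_add]
      have e3 : (‖x‖⁻¹ • x) - τ • (‖h‖⁻¹ • h) = ‖x‖⁻¹ • (x - h) := by
        rw [smul_smul, e0, smul_sub]
      rw [e2, e3, norm_smul, norm_smul,
        Real.norm_of_nonneg (by positivity : (0:ℝ) ≤ ‖x‖⁻¹),
        inv_mul_eq_div, inv_mul_eq_div] at hle2
      have hτsq : τ ^ 2 = ‖h‖ ^ 2 / ‖x‖ ^ 2 := by rw [hτdef, div_pow]
      rw [hτsq] at hle2
      -- hle2 : (‖x+h‖/‖x‖ + ‖x-h‖/‖x‖)/2 - 1 ≤ K * (‖h‖^2/‖x‖^2)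
      rw [← add_div, div_div, sub_le_iff_le_add,
        div_le_iff₀ (by positivity : (0:ℝ) < ‖x‖ * 2)] at hle2
      have e4 : (K * (‖h‖ ^ 2 / ‖x‖ ^ 2) + 1) * (‖x‖ * 2)
          = 2 * ‖x‖ + 2 * K * ‖h‖ ^ 2 / ‖x‖ := by
        field_simp
        ring
      rw [e4] at hle2
      exact hle2
  -- J 0 = 0
  have hJ0 : J (0 : E) = 0 := by
    have := hJn (0 : E)
    rw [norm_zero, norm_eq_zero] at this
    exact this
  -- the descent inequality (D)
  have hD : ∀ x h : E, ‖x + h‖ ^ 2 ≤ ‖x‖ ^ 2 + 2 * J x h + C₁ * ‖h‖ ^ 2 := by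
    intro x h
    by_cases hx0 : x = 0
    · subst hx0
      rw [hJ0]
      simp only [ContinuousLinearMap.zero_apply, zero_add, norm_zero]
      nlinarith [sq_nonneg ‖h‖, hC₁5]
    have hxn : 0 < ‖x‖ := norm_pos_iff.mpr hx0
    by_cases hcase : ‖x‖ < ‖h‖
    · -- easy case : ‖x‖ < ‖h‖
      have h1 : ‖x + h‖ ≤ ‖x‖ + ‖h‖ := norm_add_le _ _
      have h2 : -(‖x‖ * ‖h‖) ≤ J x h := by
        have := hsupp x (-h)
        rw [map_neg, norm_neg] at this
        linarith
      have han : ‖x‖ * ‖h‖ ≤ ‖h‖ * ‖h‖ :=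
        mul_le_mul_of_nonneg_right hcase.le (norm_nonneg h)
      have h5C : 5 * ‖h‖ ^ 2 ≤ C₁ * ‖h‖ ^ 2 :=
        mul_le_mul_of_nonneg_right hC₁5 (sq_nonneg ‖h‖)
      have hs2 : ‖x + h‖ ^ 2 ≤ (‖x‖ + ‖h‖) ^ 2 := by
        have h0 : 0 ≤ ‖x + h‖ := norm_nonneg _
        nlinarith [h1]
      nlinarith [hs2, han, h5C, h2]
    · -- main case : ‖h‖ ≤ ‖x‖
      push_neg at hcase
      have hstar' := hstar x h hx0
      have hsup2 : J x (x - h) ≤ ‖x‖ * ‖x - h‖ := hsupp x (x - h)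
      have e1 : J x (x - h) = ‖x‖ ^ 2 - J x h := by rw [map_sub, hJ]
      rw [e1] at hsup2
      have hdiv : ‖x‖ * (2 * K * ‖h‖ ^ 2 / ‖x‖) = 2 * K * ‖h‖ ^ 2 := by
        rw [mul_comm, div_mul_cancel₀ _ hxn.ne']
      have hmul := mul_le_mul_of_nonneg_left hstar' hxn.le
      rw [mul_add ‖x‖, mul_add ‖x‖, hdiv] at hmul
      have key : ‖x‖ * ‖x + h‖ ≤ ‖x‖ ^ 2 + J x h + 2 * K * ‖h‖ ^ 2 := by nlinarith [hmul, hsup2]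
      have hp1 : J x h ≤ ‖x‖ * ‖h‖ := hsupp x h
      have hp2 : -(‖x‖ * ‖h‖) ≤ J x h := by
        have := hsupp x (-h)
        rw [map_neg, norm_neg] at this
        linarith
      have hB0 : 0 ≤ ‖x‖ ^ 2 + J x h + 2 * K * ‖h‖ ^ 2 := by
        have : 0 ≤ ‖x‖ * ‖x + h‖ := by positivity
        linarith
      have hnn : 0 ≤ ‖x‖ * ‖x + h‖ := by positivity
      have hsq : (‖x‖ * ‖x + h‖) ^ 2 ≤ (‖x‖ ^ 2 + J x h + 2 * K * ‖h‖ ^ 2) ^ 2 := by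
        nlinarith [key, hnn, hB0]
      have hpsq : (J x h) ^ 2 ≤ (‖x‖ * ‖h‖) ^ 2 := sq_le_sq' hp2 hp1
      have hn2 : ‖h‖ ^ 2 ≤ ‖x‖ ^ 2 := by nlinarith [norm_nonneg h]
      have hb2 : 4 * K ^ 2 * (‖h‖ ^ 2 * ‖h‖ ^ 2) ≤ 4 * K ^ 2 * (‖x‖ ^ 2 * ‖h‖ ^ 2) := by
        have h4 : ‖h‖ ^ 2 * ‖h‖ ^ 2 ≤ ‖x‖ ^ 2 * ‖h‖ ^ 2 :=
          mul_le_mul_of_nonneg_right hn2 (sq_nonneg _)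
        nlinarith [h4, sq_nonneg K]
      have hpn : J x h * ‖h‖ ^ 2 ≤ ‖x‖ ^ 2 * ‖h‖ ^ 2 := by
        have h4 : J x h * ‖h‖ ^ 2 ≤ (‖x‖ * ‖h‖) * ‖h‖ ^ 2 :=
          mul_le_mul_of_nonneg_right hp1 (sq_nonneg _)
        have h5 : (‖x‖ * ‖h‖) * ‖h‖ ^ 2 ≤ (‖x‖ * ‖x‖) * ‖h‖ ^ 2 := by
          have := mul_le_mul_of_nonneg_left hcase (norm_nonneg x)
          exact mul_le_mul_of_nonneg_right this (sq_nonneg _)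
        nlinarith [h4, h5]
      have hb3 : 4 * K * (J x h * ‖h‖ ^ 2) ≤ 4 * K * (‖x‖ ^ 2 * ‖h‖ ^ 2) := by
        nlinarith [hpn, hK]
      have hsq2 : (‖x‖ ^ 2 + J x h + 2 * K * ‖h‖ ^ 2) ^ 2
          ≤ ‖x‖ ^ 2 * (‖x‖ ^ 2 + 2 * J x h + C₁ * ‖h‖ ^ 2) := by
        rw [hC₁def]
        nlinarith [hpsq, hb2, hb3, sq_nonneg (‖x‖ * ‖h‖)]
      have hfin : ‖x‖ ^ 2 * ‖x + h‖ ^ 2 ≤ ‖x‖ ^ 2 * (‖x‖ ^ 2 + 2 * J x h + C₁ * ‖h‖ ^ 2) :=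
        calc ‖x‖ ^ 2 * ‖x + h‖ ^ 2 = (‖x‖ * ‖x + h‖) ^ 2 := by ring
          _ ≤ (‖x‖ ^ 2 + J x h + 2 * K * ‖h‖ ^ 2) ^ 2 := hsq
          _ ≤ ‖x‖ ^ 2 * (‖x‖ ^ 2 + 2 * J x h + C₁ * ‖h‖ ^ 2) := hsq2
      have hx2 : 0 < ‖x‖ ^ 2 := by positivity
      exact le_of_mul_le_mul_left hfin hx2
  -- the subgradient inequality (G)
  have hG : ∀ p z : E, ‖p‖ ^ 2 + 2 * J p (z - p) ≤ ‖z‖ ^ 2 := by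
    intro p z
    have h1 : J p z ≤ ‖p‖ * ‖z‖ := hsupp p z
    have h2 : J p (z - p) = J p z - ‖p‖ ^ 2 := by rw [map_sub, hJ]
    nlinarith [sq_nonneg (‖p‖ - ‖z‖)]
  -- key inequality towards Lipschitzness of J
  have hBkey : ∀ x y h : E, 2 * (J y h - J x h) ≤ C₁ * ‖x - y‖ ^ 2 + C₁ * ‖h‖ ^ 2 := by
    intro x y h
    have g1 : ‖y‖ ^ 2 + 2 * J y (x + h - y) ≤ ‖x + h‖ ^ 2 := hG y (x + h)
    have g2 : ‖x + h‖ ^ 2 ≤ ‖x‖ ^ 2 + 2 * J x h + C₁ * ‖h‖ ^ 2 := hD x h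
    have g3 : ‖x‖ ^ 2 ≤ ‖y‖ ^ 2 + 2 * J y (x - y) + C₁ * ‖x - y‖ ^ 2 := by
      have := hD y (x - y)
      rw [add_sub_cancel] at this
      exact this
    have e : J y (x + h - y) = J y (x - y) + J y h := by
      rw [← map_add]
      congr 1
      abel
    rw [e] at g1
    linarith
  -- pointwise Lipschitz bound for J
  have hB : ∀ x y w : E, J x w - J y w ≤ C₁ * ‖x - y‖ * ‖w‖ := by
    intro x y w
    by_cases hw : w = 0
    · subst hw
      simp
    have hwn : 0 < ‖w‖ := norm_pos_iff.mpr hw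
    by_cases hxy : x = y
    · subst hxy
      simp only [sub_self, norm_zero, mul_zero, zero_mul, le_refl]
    have hdn : 0 < ‖x - y‖ := norm_pos_iff.mpr (sub_ne_zero.mpr hxy)
    set t : ℝ := ‖x - y‖ / ‖w‖ with htdef
    clear_value t
    have ht : 0 < t := by rw [htdef]; exact div_pos hdn hwn
    have hk := hBkey y x (t • w)
    have e1 : J x (t • w) = t * J x w := by rw [map_smul, smul_eq_mul]
    have e2 : J y (t • w) = t * J y w := by rw [map_smul, smul_eq_mul]
    have e3 : ‖t • w‖ = ‖x - y‖ := by
      rw [norm_smul, Real.norm_of_nonneg ht.le, htdef, div_mul_cancel₀ _ hwn.ne']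
    rw [e1, e2, e3, norm_sub_rev y x] at hk
    have h4 : (J x w - J y w) * t ≤ C₁ * ‖x - y‖ ^ 2 := by linarith [hk]
    have h5 : J x w - J y w ≤ C₁ * ‖x - y‖ ^ 2 / t := (le_div_iff₀ ht).mpr h4
    have h6 : C₁ * ‖x - y‖ ^ 2 / t = C₁ * ‖x - y‖ * ‖w‖ := by
      rw [htdef, div_eq_iff (div_pos hdn hwn).ne']
      field_simp
    rw [h6] at h5
    exact h5
  -- monotonicity lower bound
  have hmono : ∀ u v : E, (‖u‖ - ‖v‖) ^ 2 ≤ J u (u - v) - J v (u - v) := by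
    intro u v
    have e1 : J u (u - v) = ‖u‖ ^ 2 - J u v := by rw [map_sub, hJ]
    have e2 : J v (u - v) = J v u - ‖v‖ ^ 2 := by rw [map_sub, hJ]
    have h1 : J u v ≤ ‖u‖ * ‖v‖ := hsupp u v
    have h2 : J v u ≤ ‖v‖ * ‖u‖ := hsupp v u
    nlinarith [h1, h2]
  -- the 2-uniform convexity inequality
  have hM : ∀ u v : E, u ≠ v → ‖u‖ ≤ ‖v‖ →
      ‖u + v‖ ≤ 2 * ‖v‖ - 2 * c * ‖u - v‖ ^ 2 / ‖v‖ := by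
    intro u v huv hle
    have hv : v ≠ 0 := by
      intro h0
      apply huv
      rw [h0] at hle ⊢
      rw [norm_zero] at hle
      have : ‖u‖ = 0 := le_antisymm hle (norm_nonneg u)
      exact norm_eq_zero.mp this
    have hvn : 0 < ‖v‖ := norm_pos_iff.mpr hv
    have hdn : 0 < ‖u - v‖ := norm_pos_iff.mpr (sub_ne_zero.mpr huv)
    set ε : ℝ := ‖u - v‖ / ‖v‖ with hεdef
    clear_value ε
    have hε1 : 0 < ε := by rw [hεdef]; exact div_pos hdn hvn
    have hε2 : ε ≤ 2 := by
      rw [hεdef, div_le_iff₀ hvn]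
      have := norm_sub_le u v
      linarith
    have hmod := hMod ε ⟨hε1, hε2⟩
    rw [convexityModulus] at hmod
    have hbdd : BddBelow {t : ℝ | ∃ a b : E, ‖a‖ ≤ 1 ∧ ‖b‖ ≤ 1 ∧ ‖a - b‖ = ε ∧
        t = 1 - ‖a + b‖ / 2} := by
      refine ⟨0, ?_⟩
      rintro t ⟨a, b, ha, hb, _, rfl⟩
      have := norm_add_le a b
      linarith
    have hmem : 1 - ‖(‖v‖⁻¹ • u) + (‖v‖⁻¹ • v)‖ / 2 ∈ {t : ℝ | ∃ a b : E, ‖a‖ ≤ 1 ∧ ‖b‖ ≤ 1 ∧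
        ‖a - b‖ = ε ∧ t = 1 - ‖a + b‖ / 2} := by
      refine ⟨‖v‖⁻¹ • u, ‖v‖⁻¹ • v, ?_, ?_, ?_, rfl⟩
      · rw [norm_smul, Real.norm_of_nonneg (by positivity)]
        rw [inv_mul_eq_div, div_le_one hvn]
        exact hle
      · rw [norm_smul, Real.norm_of_nonneg (by positivity), inv_mul_cancel₀ hvn.ne']
      · rw [← smul_sub, norm_smul, Real.norm_of_nonneg (by positivity), inv_mul_eq_div, hεdef]
    have hinf := csInf_le hbdd hmem
    have hchain := le_trans hmod hinf
    rw [← smul_add, norm_smul, Real.norm_of_nonneg (by positivity : (0:ℝ) ≤ ‖v‖⁻¹),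
      inv_mul_eq_div] at hchain
    rw [hεdef, div_pow] at hchain
    -- hchain : c * (‖u-v‖^2/‖v‖^2) ≤ 1 - ‖u+v‖/‖v‖/2
    have hv2 : (0:ℝ) < ‖v‖ ^ 2 := by positivity
    have hgoal : ‖u + v‖ * ‖v‖ ≤ (2 * ‖v‖ - 2 * c * ‖u - v‖ ^ 2 / ‖v‖) * ‖v‖ := by
      have h1 := mul_le_mul_of_nonneg_left hchain (le_of_lt hv2)
      have e1 : ‖v‖ ^ 2 * (c * (‖u - v‖ ^ 2 / ‖v‖ ^ 2)) = c * ‖u - v‖ ^ 2 := by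
        field_simp
      have e2 : (2 * ‖v‖ - 2 * c * ‖u - v‖ ^ 2 / ‖v‖) * ‖v‖
          = 2 * ‖v‖ ^ 2 - 2 * c * ‖u - v‖ ^ 2 := by
        field_simp
      have e3 : ‖v‖ ^ 2 * (1 - ‖u + v‖ / ‖v‖ / 2) = ‖v‖ ^ 2 - ‖u + v‖ * ‖v‖ / 2 := by
        field_simp
      rw [e1, e3] at h1
      rw [e2]
      linarith
    exact le_of_mul_le_mul_right hgoal hvn
  -- strong monotonicity of J
  set θ : ℝ := min (1/2 : ℝ) (c / (6 * C₁)) with hθdef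
  clear_value θ
  have hθpos : 0 < θ := by rw [hθdef]; exact lt_min (by norm_num) (div_pos hc (by linarith))
  have hθhalf : θ ≤ 1/2 := by rw [hθdef]; exact min_le_left _ _
  have hC₁ne : C₁ ≠ 0 := hC₁pos.ne'
  have hθc : 3 * C₁ * θ ≤ c / 2 := by
    have h1 : θ ≤ c / (6 * C₁) := by rw [hθdef]; exact min_le_right _ _
    have h2 := mul_le_mul_of_nonneg_left h1 (by linarith : (0:ℝ) ≤ 3 * C₁)
    have e : 3 * C₁ * (c / (6 * C₁)) = c / 2 := by
      field_simp
      ring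
    rw [e] at h2
    exact h2
  set c₂ : ℝ := min (θ ^ 2) (c / 2) with hc₂def
  clear_value c₂
  have hc₂pos : 0 < c₂ := by rw [hc₂def]; exact lt_min (pow_pos hθpos 2) (half_pos hc)
  have hstrongAux : ∀ u v : E, ‖v‖ ≤ ‖u‖ →
      c₂ * ‖u - v‖ ^ 2 ≤ J u (u - v) - J v (u - v) := by
    intro u v hba
    rcases eq_or_ne u v with rfl | huv
    · simp
    have hd : 0 < ‖u - v‖ := norm_pos_iff.mpr (sub_ne_zero.mpr huv)
    have hδd : ‖u‖ - ‖v‖ ≤ ‖u - v‖ := norm_sub_norm_le u v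
    have hδ0 : 0 ≤ ‖u‖ - ‖v‖ := sub_nonneg.mpr hba
    rcases le_or_gt (θ * ‖u - v‖) (‖u‖ - ‖v‖) with hcase | hcase
    · -- radial case
      have h1 := hmono u v
      have h2 : (θ * ‖u - v‖) ^ 2 ≤ (‖u‖ - ‖v‖) ^ 2 := by
        have h0 : 0 ≤ θ * ‖u - v‖ := by positivity
        nlinarith [hcase]
      have h3 : c₂ ≤ θ ^ 2 := by rw [hc₂def]; exact min_le_left _ _
      nlinarith [sq_nonneg ‖u - v‖, h1, h2, h3]
    · -- tangential case
      have hb : 0 < ‖v‖ := by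
        rcases lt_or_eq_of_le (norm_nonneg v) with h | h
        · exact h
        · exfalso
          have hv0 : v = 0 := norm_eq_zero.mp h.symm
          rw [hv0, sub_zero] at hcase hd
          rw [norm_zero, sub_zero] at hcase
          nlinarith [hcase, hθhalf, hd]
      set a := ‖u‖ with hadef
      set b := ‖v‖ with hbdef
      clear_value a b
      have ha : 0 < a := lt_of_lt_of_le hb hba
      set v' : E := (a / b) • v with hv'def
      clear_value v'
      have hab1 : 1 ≤ a / b := (one_le_div hb).mpr hba
      have hv'n : ‖v'‖ = a := by
        rw [hv'def, norm_smul, Real.norm_of_nonneg (by positivity), ← hbdef,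
          div_mul_cancel₀ _ hb.ne']
      have hv'v : ‖v' - v‖ = a - b := by
        have e : v' - v = (a / b - 1) • v := by
          rw [hv'def, sub_smul, one_smul]
        rw [e, norm_smul, Real.norm_of_nonneg (by linarith), ← hbdef, sub_mul,
          div_mul_cancel₀ _ hb.ne', one_mul]
      have hd'low : ‖u - v‖ - (a - b) ≤ ‖u - v'‖ := by
        have e : u - v = (u - v') + (v' - v) := by abel
        have h0 := norm_add_le (u - v') (v' - v)
        rw [← e, hv'v] at h0
        linarith
      have hd'high : ‖u - v'‖ ≤ ‖u - v‖ + (a - b) := by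
        have e : u - v' = (u - v) - (v' - v) := by abel
        have h0 := norm_sub_le (u - v) (v' - v)
        rw [← e, hv'v] at h0
        linarith
      have hd'pos : 0 < ‖u - v'‖ := by
        have h0 : θ * ‖u - v‖ ≤ (1/2) * ‖u - v‖ :=
          mul_le_mul_of_nonneg_right hθhalf hd.le
        nlinarith [hd'low, hcase, hd]
      have hune : u ≠ v' := by
        intro h0
        rw [h0, sub_self, norm_zero] at hd'pos
        exact lt_irrefl 0 hd'pos
      -- apply the convexity inequality to u, v'
      have hMuv : ‖u + v'‖ ≤ 2 * a - 2 * c * ‖u - v'‖ ^ 2 / a := by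
        have h0 := hM u v' hune (by rw [hv'n]; exact hadef.ge)
        rw [hv'n] at h0
        exact h0
      -- Q' lower bound
      have hju : J u v' ≤ a * ‖u + v'‖ - a ^ 2 := by
        have h1 : J u (u + v') ≤ a * ‖u + v'‖ := by
          rw [hadef]; exact hsupp u (u + v')
        have h2 : J u (u + v') = a ^ 2 + J u v' := by rw [map_add, hJ, ← hadef]
        rw [h2] at h1
        linarith
      have hjv : J v' u ≤ a * ‖u + v'‖ - a ^ 2 := by
        have h1 : J v' (u + v') ≤ a * ‖u + v'‖ := by
          have h0 := hsupp v' (u + v')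
          rw [hv'n] at h0
          exact h0
        have h2 : J v' (u + v') = J v' u + a ^ 2 := by
          rw [map_add, hJ, hv'n]
        rw [h2] at h1
        linarith
      have hQ' : 4 * c * (‖u - v‖ - (a - b)) ^ 2 ≤ J u (u - v') - J v' (u - v') := by
        have e1 : J u (u - v') = a ^ 2 - J u v' := by rw [map_sub, hJ, ← hadef]
        have e2 : J v' (u - v') = J v' u - a ^ 2 := by rw [map_sub, hJ, hv'n]
        have hdiv : a * (2 * c * ‖u - v'‖ ^ 2 / a) = 2 * c * ‖u - v'‖ ^ 2 := by
          rw [mul_comm, div_mul_cancel₀ _ ha.ne']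
        have hmul := mul_le_mul_of_nonneg_left hMuv ha.le
        rw [mul_sub a, hdiv] at hmul
        have hQ'1 : 4 * c * ‖u - v'‖ ^ 2 ≤ J u (u - v') - J v' (u - v') := by
          rw [e1, e2]
          nlinarith [hmul, hju, hjv]
        have hsq : (‖u - v‖ - (a - b)) ^ 2 ≤ ‖u - v'‖ ^ 2 := by
          have h0 : 0 ≤ ‖u - v‖ - (a - b) := by nlinarith [hcase, hθhalf, hd]
          nlinarith [hd'low, h0]
        nlinarith [hQ'1, hsq, hc]
      -- error terms
      have herr1 : -(C₁ * ‖u - v'‖ * (a - b)) ≤ J u (v' - v) - J v' (v' - v) := by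
        have h0 := hB v' u (v' - v)
        rw [norm_sub_rev v' u, hv'v] at h0
        linarith
      have herr2 : -(C₁ * (a - b) * ‖u - v‖) ≤ J v' (u - v) - J v (u - v) := by
        have h0 := hB v v' (u - v)
        rw [norm_sub_rev v v', hv'v] at h0
        linarith
      -- splitting identity
      have hsplit : J u (u - v) - J v (u - v)
          = (J u (u - v') - J v' (u - v')) + (J u (v' - v) - J v' (v' - v))
            + (J v' (u - v) - J v (u - v)) := by
        have eu : J u (u - v) = J u (u - v') + J u (v' - v) := by
          rw [← map_add]
          congr 1
          abel
        have ev : J v' (u - v) = J v' (u - v') + J v' (v' - v) := by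
          rw [← map_add]
          congr 1
          abel
        rw [eu, ev]
        ring
      -- numeric finish
      have hθd : (‖u - v‖ - θ * ‖u - v‖) ^ 2 ≤ (‖u - v‖ - (a - b)) ^ 2 := by
        have h0 : 0 ≤ ‖u - v‖ - θ * ‖u - v‖ := by nlinarith [hθhalf, hd]
        have h1 : ‖u - v‖ - θ * ‖u - v‖ ≤ ‖u - v‖ - (a - b) := by linarith [hcase.le]
        nlinarith [h0, h1]
      have hquarter : (1/4) * ‖u - v‖ ^ 2 ≤ (‖u - v‖ - θ * ‖u - v‖) ^ 2 := by
        have h0 : (0:ℝ) ≤ 1/2 - θ := by linarith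
        have h1 : (0:ℝ) ≤ 3/2 - θ := by linarith
        nlinarith [mul_nonneg h0 h1, sq_nonneg ‖u - v‖, mul_nonneg (mul_nonneg h0 h1) (sq_nonneg ‖u - v‖)]
      have hub1 : C₁ * ‖u - v'‖ * (a - b) ≤ 2 * C₁ * θ * ‖u - v‖ ^ 2 := by
        have h1 : ‖u - v'‖ ≤ 2 * ‖u - v‖ := by linarith [hd'high, hδd]
        have h3 : a - b ≤ θ * ‖u - v‖ := hcase.le
        have s0 : C₁ * ‖u - v'‖ ≤ C₁ * (2 * ‖u - v‖) :=
          mul_le_mul_of_nonneg_left h1 hC₁pos.le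
        have s1 : C₁ * ‖u - v'‖ * (a - b) ≤ C₁ * (2 * ‖u - v‖) * (θ * ‖u - v‖) :=
          mul_le_mul s0 h3 hδ0 (mul_nonneg hC₁pos.le (by positivity))
        calc C₁ * ‖u - v'‖ * (a - b) ≤ C₁ * (2 * ‖u - v‖) * (θ * ‖u - v‖) := s1
          _ = 2 * C₁ * θ * ‖u - v‖ ^ 2 := by ring
      have hub2 : C₁ * (a - b) * ‖u - v‖ ≤ C₁ * θ * ‖u - v‖ ^ 2 := by
        have h3 : a - b ≤ θ * ‖u - v‖ := hcase.le
        have s0 : C₁ * (a - b) ≤ C₁ * (θ * ‖u - v‖) :=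
          mul_le_mul_of_nonneg_left h3 hC₁pos.le
        have s1 : C₁ * (a - b) * ‖u - v‖ ≤ C₁ * (θ * ‖u - v‖) * ‖u - v‖ :=
          mul_le_mul_of_nonneg_right s0 hd.le
        calc C₁ * (a - b) * ‖u - v‖ ≤ C₁ * (θ * ‖u - v‖) * ‖u - v‖ := s1
          _ = C₁ * θ * ‖u - v‖ ^ 2 := by ring
      have hc₂le : c₂ ≤ c / 2 := by rw [hc₂def]; exact min_le_right _ _
      have hQ'2 : c * ‖u - v‖ ^ 2 ≤ J u (u - v') - J v' (u - v') := by
        have s0 : (1/4) * ‖u - v‖ ^ 2 ≤ (‖u - v‖ - (a - b)) ^ 2 := hquarter.trans hθd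
        have s1 : 4 * c * ((1/4) * ‖u - v‖ ^ 2) ≤ 4 * c * (‖u - v‖ - (a - b)) ^ 2 :=
          mul_le_mul_of_nonneg_left s0 (by linarith)
        calc c * ‖u - v‖ ^ 2 = 4 * c * ((1/4) * ‖u - v‖ ^ 2) := by ring
          _ ≤ 4 * c * (‖u - v‖ - (a - b)) ^ 2 := s1
          _ ≤ J u (u - v') - J v' (u - v') := hQ'
      have hθterm : 3 * C₁ * θ * ‖u - v‖ ^ 2 ≤ (c / 2) * ‖u - v‖ ^ 2 :=
        mul_le_mul_of_nonneg_right hθc (sq_nonneg _)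
      have hc₂d : c₂ * ‖u - v‖ ^ 2 ≤ (c / 2) * ‖u - v‖ ^ 2 :=
        mul_le_mul_of_nonneg_right hc₂le (sq_nonneg _)
      rw [hsplit]
      linarith [hQ'2, herr1, herr2, hub1, hub2, hθterm, hc₂d]
  -- strong monotonicity (general)
  have hstrong : ∀ u v : E, c₂ * ‖u - v‖ ^ 2 ≤ J u (u - v) - J v (u - v) := by
    intro u v
    rcases le_total ‖v‖ ‖u‖ with h | h
    · exact hstrongAux u v h
    · have h0 := hstrongAux v u h
      rw [norm_sub_rev v u] at h0
      have e : J v (v - u) - J u (v - u) = J u (u - v) - J v (u - v) := by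
        have e1 : (v - u) = -(u - v) := by abel
        rw [e1, map_neg, map_neg]
        ring
      rw [e] at h0
      exact h0
  -- conclusion
  refine ⟨C₁ / c₂, ?_⟩
  intro x hx y hy
  have h1 := hT x hx y hy
  simp only [ContinuousLinearMap.sub_apply] at h1
  have h2 := hstrong (T x) (T y)
  have h3 := hB x y (T x - T y)
  by_cases hw : T x = T y
  · rw [hw, sub_self, norm_zero]
    have : 0 ≤ C₁ / c₂ * ‖x - y‖ := by positivity
    linarith
  have hwn : 0 < ‖T x - T y‖ := norm_pos_iff.mpr (sub_ne_zero.mpr hw)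
  have hchain : c₂ * ‖T x - T y‖ ^ 2 ≤ C₁ * ‖x - y‖ * ‖T x - T y‖ := by
    linarith
  rw [div_mul_eq_mul_div, le_div_iff₀ hc₂pos]
  nlinarith [hchain, hwn]
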